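/- Let (X, 𝒜) be a measurable space, μ, ν finite countably additive measures on 𝒜 with ν ≥ 0, and g : X → ℝ a measurable function. Then μ(A) = ∫_A g dν for all A ∈ 𝒜 if and only if for every real number a: (1) μ(A) ≥ a·ν(A) for every A ∈ 𝒜 with A ⊆ {x : g(x) ≥ a}, and (2) μ(A) ≤ a·ν(A) for every A ∈ 𝒜 with A ⊆ {x : g(x) ≤ a}. -/

import Mathlib

open MeasureTheory

set_option maxHeartbeats 1000000

/-- Hahn-decomposition characterization of the Radon–Nikodym derivative
(Nikodym 1930): a finite signed measure `μ` has density `g` with respect to a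
finite nonnegative measure `ν` iff for every real `a`, `μ(A) ≥ a·ν(A)` on
measurable subsets of `{g ≥ a}` and `μ(A) ≤ a·ν(A)` on measurable subsets of
`{g ≤ a}`. -/
theorem radon_nikodym_hahn_characterization {X : Type*} [MeasurableSpace X]
    (μ : SignedMeasure X) (ν : Measure X) [IsFiniteMeasure ν]
    (g : X → ℝ) (hgm : Measurable g) (hgi : Integrable g ν) :
    (∀ A : Set X, MeasurableSet A → μ A = ∫ x in A, g x ∂ν) ↔
      (∀ a : ℝ,
        (∀ A : Set X, MeasurableSet A → A ⊆ {x | a ≤ g x} →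
          a * (ν A).toReal ≤ μ A) ∧
        (∀ A : Set X, MeasurableSet A → A ⊆ {x | g x ≤ a} →
          μ A ≤ a * (ν A).toReal)) := by
  constructor
  · intro h a
    constructor
    · intro A hA hsub
      rw [h A hA]
      calc a * (ν A).toReal = ∫ _ in A, a ∂ν := by
            rw [setIntegral_const, smul_eq_mul, mul_comm]; rfl
        _ ≤ ∫ x in A, g x ∂ν :=
            setIntegral_mono_on (integrableOn_const (measure_ne_top ν A))
              hgi.integrableOn hA (fun x hx => hsub hx)
    · intro A hA hsub
      rw [h A hA]
      calc (∫ x in A, g x ∂ν) ≤ ∫ _ in A, a ∂ν :=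
            setIntegral_mono_on hgi.integrableOn
              (integrableOn_const (measure_ne_top ν A)) hA (fun x hx => hsub hx)
        _ = a * (ν A).toReal := by rw [setIntegral_const, smul_eq_mul, mul_comm]; rfl
  · intro h A hA
    have key : ∀ ε : ℝ, 0 < ε →
        |μ A - ∫ x in A, g x ∂ν| ≤ ε * (ν Set.univ).toReal := by
      intro ε hε
      set B : ℤ → Set X := fun k => A ∩ g ⁻¹' Set.Ico (k * ε) ((k + 1) * ε) with hB
      have hBm : ∀ k, MeasurableSet (B k) := fun k => hA.inter (hgm measurableSet_Ico)
      have hdisj : Pairwise (Function.onFun Disjoint B) := by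
        intro i j hij
        apply Set.disjoint_left.mpr
        rintro x ⟨-, hxi⟩ ⟨-, hxj⟩
        simp only [Set.mem_preimage, Set.mem_Ico] at hxi hxj
        apply hij
        have h1 : (i : ℝ) < j + 1 :=
          lt_of_mul_lt_mul_right (lt_of_le_of_lt hxi.1 hxj.2) hε.le
        have h2 : (j : ℝ) < i + 1 :=
          lt_of_mul_lt_mul_right (lt_of_le_of_lt hxj.1 hxi.2) hε.le
        have h1' : i < j + 1 := by exact_mod_cast h1
        have h2' : j < i + 1 := by exact_mod_cast h2
        omega
      have hUnion : (⋃ k, B k) = A := by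
        ext x
        simp only [hB, Set.mem_iUnion, Set.mem_inter_iff, Set.mem_preimage, Set.mem_Ico]
        constructor
        · rintro ⟨k, hx, -⟩; exact hx
        · intro hx
          refine ⟨⌊g x / ε⌋, hx, ?_, ?_⟩
          · calc (⌊g x / ε⌋ : ℝ) * ε ≤ g x / ε * ε :=
                mul_le_mul_of_nonneg_right (Int.floor_le _) hε.le
              _ = g x := div_mul_cancel₀ _ hε.ne'
          · calc g x = g x / ε * ε := (div_mul_cancel₀ _ hε.ne').symm
              _ < (⌊g x / ε⌋ + 1) * ε :=
                mul_lt_mul_of_pos_right (Int.lt_floor_add_one _) hε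
      -- per-slab bound
      have slab : ∀ k : ℤ, |μ (B k) - ∫ x in B k, g x ∂ν| ≤ ε * (ν (B k)).toReal := by
        intro k
        have hsub1 : B k ⊆ {x | (k : ℝ) * ε ≤ g x} := by
          rintro x ⟨-, hx⟩; exact hx.1
        have hsub2 : B k ⊆ {x | g x ≤ ((k : ℝ) + 1) * ε} := by
          rintro x ⟨-, hx⟩; exact hx.2.le
        have hμlo := (h ((k : ℝ) * ε)).1 (B k) (hBm k) hsub1
        have hμhi := (h (((k : ℝ) + 1) * ε)).2 (B k) (hBm k) hsub2
        have hIc : IntegrableOn (fun _ : X => (1 : ℝ)) (B k) ν :=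
          integrableOn_const (measure_ne_top ν _)
        have hIlo : (k : ℝ) * ε * (ν (B k)).toReal ≤ ∫ x in B k, g x ∂ν := by
          calc (k : ℝ) * ε * (ν (B k)).toReal = ∫ _ in B k, (k : ℝ) * ε ∂ν := by
                rw [setIntegral_const, smul_eq_mul, mul_comm]; rfl
            _ ≤ ∫ x in B k, g x ∂ν :=
              setIntegral_mono_on (integrableOn_const (measure_ne_top ν _))
                hgi.integrableOn (hBm k) (fun x hx => hsub1 hx)
        have hIhi : (∫ x in B k, g x ∂ν) ≤ ((k : ℝ) + 1) * ε * (ν (B k)).toReal := by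
          calc (∫ x in B k, g x ∂ν) ≤ ∫ _ in B k, ((k : ℝ) + 1) * ε ∂ν :=
              setIntegral_mono_on hgi.integrableOn
                (integrableOn_const (measure_ne_top ν _)) (hBm k)
                (fun x hx => hsub2 hx)
            _ = ((k : ℝ) + 1) * ε * (ν (B k)).toReal := by
              rw [setIntegral_const, smul_eq_mul, mul_comm]; rfl
        rw [abs_sub_le_iff]
        constructor <;> nlinarith [ENNReal.toReal_nonneg (a := ν (B k))]
      -- summability of the measures
      have hνsum : HasSum (fun k => (ν (B k)).toReal) ((ν A).toReal) := by
        have htsum : ∑' k, ν (B k) = ν A := by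
          rw [← measure_iUnion hdisj hBm, hUnion]
        have hne : ∑' k, ν (B k) ≠ ⊤ := by rw [htsum]; exact measure_ne_top ν A
        have h2 : (ν A).toReal = ∑' k, (ν (B k)).toReal := by
          rw [← htsum, ENNReal.tsum_toReal_eq (fun k => measure_ne_top ν _)]
        rw [h2]
        exact (ENNReal.summable_toReal hne).hasSum
      have hμsum : HasSum (fun k => μ (B k)) (μ A) := by
        have := VectorMeasure.hasSum_of_disjoint_iUnion (v := μ) hBm hdisj
        rwa [hUnion] at this
      have hIsum : HasSum (fun k => ∫ x in B k, g x ∂ν) (∫ x in A, g x ∂ν) := by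
        have := hasSum_integral_iUnion hBm hdisj (by rw [hUnion]; exact hgi.integrableOn)
        rwa [hUnion] at this
      have hdsum : HasSum (fun k => μ (B k) - ∫ x in B k, g x ∂ν)
          (μ A - ∫ x in A, g x ∂ν) := hμsum.sub hIsum
      have hsummable : Summable (fun k => |μ (B k) - ∫ x in B k, g x ∂ν|) :=
        Summable.of_nonneg_of_le (fun k => abs_nonneg _) slab
          (hνsum.summable.mul_left ε)
      calc |μ A - ∫ x in A, g x ∂ν| = |∑' k, (μ (B k) - ∫ x in B k, g x ∂ν)| := by
            rw [hdsum.tsum_eq]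
        _ ≤ ∑' k, |μ (B k) - ∫ x in B k, g x ∂ν| := by
            have := norm_tsum_le_tsum_norm
              (f := fun k => μ (B k) - ∫ x in B k, g x ∂ν)
              (by simpa [Real.norm_eq_abs] using hsummable)
            simpa [Real.norm_eq_abs] using this
        _ ≤ ∑' k, ε * (ν (B k)).toReal :=
            Summable.tsum_le_tsum slab hsummable (hνsum.summable.mul_left ε)
        _ = ε * (ν A).toReal := by rw [(hνsum.mul_left ε).tsum_eq]
        _ ≤ ε * (ν Set.univ).toReal :=
            mul_le_mul_of_nonneg_left
              (ENNReal.toReal_mono (measure_ne_top ν _) (measure_mono (Set.subset_univ A))) hε.le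
    by_contra hne
    have habs : 0 < |μ A - ∫ x in A, g x ∂ν| := abs_pos.2 (sub_ne_zero.2 hne)
    set d := |μ A - ∫ x in A, g x ∂ν|
    set C := (ν Set.univ).toReal with hC
    have hC0 : 0 ≤ C := ENNReal.toReal_nonneg
    have := key (d / (2 * (C + 1))) (by positivity)
    rw [div_mul_eq_mul_div, le_div_iff₀ (by positivity)] at this
    nlinarith [mul_nonneg habs.le hC0]
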